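/- Suppose condition (P1') holds: for every k ∈ -ℕ, N_{k,l} converges a.s. as l → -∞ to a random variable Y_k. Suppose moreover that Y_k ∈ Σ^c a.s. for each k, where Σ^c is the set of elements of Σ having cancellative action on S. Then for any extremal solution {X,N} there exists a deterministic element x ∈ S such that X_l → x a.s. as l → -∞ and X_k = Y_k x a.s. for every k ∈ -ℕ. Moreover, unless Σ^c S := {σx : σ ∈ Σ^c, x ∈ S} is a singleton, uniqueness in law fails. -/

import Mathlib

open MeasureTheory ProbabilityTheory Filter Topology
open scoped NNReal ENNReal
set_option linter.unusedSectionVars false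
set_option maxHeartbeats 1000000

universe u v w w₂

noncomputable section

/-- The sub-σ-field generated by the process `Y` from index `k` on; since index `j : ℕ`
stands for time `-j`, this is the σ-field of the past `σ(Y_j : j ≤ -k)`. -/
def past {Ω α : Type*} [MeasurableSpace α] (Y : ℕ → Ω → α) (k : ℕ) : MeasurableSpace Ω :=
  ⨆ j ≥ k, MeasurableSpace.comap (Y j) inferInstance

/-- A solution of Tsirelson's equation with noise law `μ`.  The index `k : ℕ` stands for the
time `-k ∈ -ℕ`, so that time `k - 1` corresponds to index `k + 1`. -/
structure IsSolution {Ω S G : Type*} [MeasurableSpace Ω] [MeasurableSpace S] [MeasurableSpace G]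
    [SMul G S] (P : Measure Ω) (μ : ℕ → Measure G)
    (X : ℕ → Ω → S) (N : ℕ → Ω → G) : Prop where
  measurable_X : ∀ k, Measurable (X k)
  measurable_N : ∀ k, Measurable (N k)
  eqn : ∀ k, X k =ᵐ[P] fun ω => N k ω • X (k + 1) ω
  indep : ∀ k, Indep (MeasurableSpace.comap (N k) inferInstance)
      (past X (k + 1) ⊔ past N (k + 1)) P
  law_N : ∀ k, P.map (N k) = μ k

/-- The joint law of `(X, N)` on the path space `S^{-ℕ} × Σ^{-ℕ}`. -/
def jointLaw {Ω S G : Type*} [MeasurableSpace Ω] [MeasurableSpace S] [MeasurableSpace G]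
    (P : Measure Ω) (X : ℕ → Ω → S) (N : ℕ → Ω → G) : Measure ((ℕ → S) × (ℕ → G)) :=
  P.map fun ω => (fun k => X k ω, fun k => N k ω)

/-- A solution is strong if each `X k` is a.s. equal to a `past N k`-measurable function,
i.e. `X k` is measurable for the `P`-completion of `σ(N_j : j ≤ -k)`. -/
def IsStrong {Ω S G : Type*} [MeasurableSpace Ω] [MeasurableSpace S] [MeasurableSpace G]
    (P : Measure Ω) (X : ℕ → Ω → S) (N : ℕ → Ω → G) : Prop :=
  ∀ k, ∃ Y : Ω → S, Measurable[past N k] Y ∧ X k =ᵐ[P] Y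

/-- Triviality of the tail σ-field `⨅ k, m k`. -/
def TailTrivial {Ω : Type*} [MeasurableSpace Ω] (P : Measure Ω)
    (m : ℕ → MeasurableSpace Ω) : Prop :=
  ∀ A : Set Ω, MeasurableSet[⨅ k, m k] A → P A = 0 ∨ P A = 1

/-- Convolution `μ * ν` of a measure on the acting semigroup with a measure on the space:
the pushforward of `μ ⊗ ν` under the action map. -/
def conv {G S : Type*} [MeasurableSpace G] [MeasurableSpace S] [SMul G S]
    (μ : Measure G) (ν : Measure S) : Measure S :=
  (μ.prod ν).map fun p => p.1 • p.2

/-- Convolution of two measures on the semigroup. -/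
def convG {G : Type*} [MeasurableSpace G] [Mul G] (μ ν : Measure G) : Measure G :=
  (μ.prod ν).map fun p => p.1 * p.2

/-- `prodN N n j = N_n · N_{n+1} · ⋯ · N_{n+j}`; in the time-indexing of the paper (index `m`
is time `-m`) this is `N_{k,l}` with `k = -n` and `l = -(n+j)-1 → -∞` as `j → ∞`. -/
def prodN {Ω G : Type*} [Mul G] (N : ℕ → Ω → G) (n : ℕ) : ℕ → Ω → G
  | 0 => N n
  | j + 1 => fun ω => prodN N n j ω * N (n + j + 1) ω

/-- `convIter μ n j = μ_n * μ_{n+1} * ⋯ * μ_{n+j}`, the law analogue of `prodN`. -/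
def convIter {G : Type*} [MeasurableSpace G] [Mul G] (μ : ℕ → Measure G) (n : ℕ) :
    ℕ → Measure G
  | 0 => μ n
  | j + 1 => convG (convIter μ n j) (μ (n + j + 1))

/-- `sigPow G n` is `Σ^{n+1}`, the set of products of `n+1` elements of `Σ = G`. -/
def sigPow (G : Type*) [Mul G] : ℕ → Set G
  | 0 => Set.univ
  | n + 1 => Set.image2 (· * ·) (sigPow G n) Set.univ

/-- Two sub-σ-fields are equal up to `P`-null sets. -/
def EqModNull {Ω : Type*} [MeasurableSpace Ω] (P : Measure Ω)
    (m₁ m₂ : MeasurableSpace Ω) : Prop :=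
  (∀ A, MeasurableSet[m₁] A → ∃ B, MeasurableSet[m₂] B ∧ P (symmDiff A B) = 0) ∧
  (∀ B, MeasurableSet[m₂] B → ∃ A, MeasurableSet[m₁] A ∧ P (symmDiff A B) = 0)

end

section Context

variable {S : Type u} {G : Type v}
  [TopologicalSpace S] [CompactSpace S] [TopologicalSpace.MetrizableSpace S]
  [SecondCountableTopology S] [MeasurableSpace S] [BorelSpace S]
  [TopologicalSpace G] [CompactSpace G] [TopologicalSpace.MetrizableSpace G]
  [SecondCountableTopology G] [MeasurableSpace G] [BorelSpace G]
  [Semigroup G] [ContinuousMul G]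
  [SMul G S] [ContinuousSMul G S] [IsScalarTower G G S]

end Context

section Tsirelson

variable {S : Type u} {G : Type v}
  [TopologicalSpace S] [CompactSpace S] [TopologicalSpace.MetrizableSpace S]
  [SecondCountableTopology S] [MeasurableSpace S] [BorelSpace S]
  [TopologicalSpace G] [CompactSpace G] [TopologicalSpace.MetrizableSpace G]
  [SecondCountableTopology G] [MeasurableSpace G] [BorelSpace G]
  [Semigroup G] [ContinuousMul G]
  [SMul G S] [ContinuousSMul G S] [IsScalarTower G G S]


namespace TsirelsonAux

open MeasurableSpace

lemma measurable_past_self {Ω α : Type*} [MeasurableSpace α] {Y : ℕ → Ω → α} {k j : ℕ}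
    (h : k ≤ j) : Measurable[past Y k] (Y j) := by
  rw [measurable_iff_comap_le]
  exact le_iSup₂ (f := fun j (_ : j ≥ k) => MeasurableSpace.comap (Y j) inferInstance) j h

lemma past_le {Ω α : Type*} [m0 : MeasurableSpace Ω] [MeasurableSpace α] {Y : ℕ → Ω → α}
    (hY : ∀ j, Measurable (Y j)) (k : ℕ) : past Y k ≤ m0 :=
  iSup₂_le fun j _ => (hY j).comap_le

lemma past_mono {Ω α : Type*} [MeasurableSpace α] {Y : ℕ → Ω → α} {k k' : ℕ} (h : k ≤ k') :
    past Y k' ≤ past Y k :=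
  iSup₂_le fun j hj => le_iSup₂ (f := fun j (_ : j ≥ k) => MeasurableSpace.comap (Y j) inferInstance) j (h.trans hj)

lemma prodN_succ {Ω G : Type*} [Mul G] (N : ℕ → Ω → G) (n j : ℕ) (ω : Ω) :
    prodN N n (j + 1) ω = prodN N n j ω * N (n + j + 1) ω := rfl

lemma prodN_succ_left {Ω G : Type*} [Semigroup G] (N : ℕ → Ω → G) (n : ℕ) :
    ∀ (j : ℕ) (ω : Ω), prodN N n (j + 1) ω = N n ω * prodN N (n + 1) j ω := by
  intro j
  induction j with
  | zero => intro ω; rfl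
  | succ j ih =>
      intro ω
      rw [prodN_succ, ih, mul_assoc, prodN_succ]
      congr 3
      omega

end TsirelsonAux


lemma X_eq_prodN_smul {Ω : Type w} [MeasurableSpace Ω] {P : Measure Ω}
    {μ : ℕ → Measure G} {X : ℕ → Ω → S} {N : ℕ → Ω → G}
    (h : IsSolution P μ X N) (n : ℕ) :
    ∀ j : ℕ, X n =ᵐ[P] fun ω => prodN N n j ω • X (n + j + 1) ω := by
  intro j
  induction j with
  | zero => exact h.eqn n
  | succ j ih =>
      filter_upwards [ih, h.eqn (n + j + 1)] with ω h1 h2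
      rw [h1, h2, TsirelsonAux.prodN_succ, ← smul_eq_mul, smul_assoc]
      rfl

lemma isSolution_jointLaw {Ω : Type w} [MeasurableSpace Ω] (P : Measure Ω)
    [IsProbabilityMeasure P] (μ : ℕ → Measure G) (X : ℕ → Ω → S) (N : ℕ → Ω → G)
    (h : IsSolution P μ X N) :
    IsSolution (jointLaw P X N) μ (fun k (p : (ℕ → S) × (ℕ → G)) => p.1 k)
      (fun k p => p.2 k) := by
  set Φ : Ω → (ℕ → S) × (ℕ → G) := fun ω => (fun k => X k ω, fun k => N k ω) with hΦdef
  have hΦ : Measurable Φ :=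
    Measurable.prodMk (measurable_pi_lambda _ h.measurable_X)
      (measurable_pi_lambda _ h.measurable_N)
  have hXc : ∀ k, Measurable fun p : (ℕ → S) × (ℕ → G) => p.1 k :=
    fun k => (measurable_pi_apply k).comp measurable_fst
  have hNc : ∀ k, Measurable fun p : (ℕ → S) × (ℕ → G) => p.2 k :=
    fun k => (measurable_pi_apply k).comp measurable_snd
  have hcomapN : ∀ k, (MeasurableSpace.comap (fun p : (ℕ → S) × (ℕ → G) => p.2 k)
      inferInstance).comap Φ = MeasurableSpace.comap (N k) inferInstance := by
    intro k
    rw [MeasurableSpace.comap_comp]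
    rfl
  have hcomapPast : ∀ k, (past (fun k (p : (ℕ → S) × (ℕ → G)) => p.1 k) k ⊔
        past (fun k (p : (ℕ → S) × (ℕ → G)) => p.2 k) k).comap Φ
      = past X k ⊔ past N k := by
    intro k
    simp only [past, MeasurableSpace.comap_sup, MeasurableSpace.comap_iSup,
      MeasurableSpace.comap_comp]
    rfl
  constructor
  · exact hXc
  · exact hNc
  · intro k
    have hs : MeasurableSet {p : (ℕ → S) × (ℕ → G) | p.1 k = p.2 k • p.1 (k + 1)} := by
      have : {p : (ℕ → S) × (ℕ → G) | p.1 k = p.2 k • p.1 (k + 1)}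
          = (fun p : (ℕ → S) × (ℕ → G) => ((p.1 k : S), p.2 k • p.1 (k + 1)))⁻¹'
            {q : S × S | q.1 = q.2} := rfl
      rw [this]
      have hsmul : Measurable fun p : (ℕ → S) × (ℕ → G) => p.2 k • p.1 (k + 1) :=
        (continuous_smul.measurable).comp ((hNc k).prodMk (hXc (k + 1)))
      exact ((hXc k).prodMk hsmul) (isClosed_eq continuous_fst continuous_snd).measurableSet
    show (fun p : (ℕ → S) × (ℕ → G) => p.1 k) =ᵐ[P.map Φ] _
    rw [Filter.EventuallyEq]
    rw [MeasureTheory.ae_map_iff hΦ.aemeasurable hs]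
    exact h.eqn k
  · intro k
    rw [Indep_iff]
    intro t1 t2 ht1 ht2
    have ht1' : MeasurableSet t1 := (hNc k).comap_le _ ht1
    have ht2' : MeasurableSet t2 := by
      refine (sup_le (TsirelsonAux.past_le hXc _) (TsirelsonAux.past_le hNc _)) _ ht2
    have m1 : MeasurableSet[MeasurableSpace.comap (N k) inferInstance] (Φ ⁻¹' t1) := by
      rw [← hcomapN k]; exact ⟨t1, ht1, rfl⟩
    have m2 : MeasurableSet[past X (k + 1) ⊔ past N (k + 1)] (Φ ⁻¹' t2) := by
      rw [← hcomapPast (k + 1)]; exact ⟨t2, ht2, rfl⟩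
    have := (Indep_iff _ _ _).1 (h.indep k) (Φ ⁻¹' t1) (Φ ⁻¹' t2) m1 m2
    show (P.map Φ) (t1 ∩ t2) = (P.map Φ) t1 * (P.map Φ) t2
    rw [Measure.map_apply hΦ (ht1'.inter ht2'), Measure.map_apply hΦ ht1',
      Measure.map_apply hΦ ht2', Set.preimage_inter]
    exact this
  · intro k
    show (P.map Φ).map _ = μ k
    rw [Measure.map_map (hNc k) hΦ]
    exact h.law_N k


/-- Product of the first `j+1` coordinates of a path, matching `prodN` under shifting. -/
def Gprod {G : Type v} [Mul G] : ℕ → (ℕ → G) → G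
  | 0 => fun w => w 0
  | j + 1 => fun w => Gprod j w * w (j + 1)

lemma measurable_Gprod (j : ℕ) : Measurable (Gprod (G := G) j) := by
  induction j with
  | zero => exact measurable_pi_apply 0
  | succ j ih =>
      exact (continuous_mul.measurable).comp (ih.prodMk (measurable_pi_apply (j + 1)))

lemma Gprod_eq_prodN {Ω : Type w} (N : ℕ → Ω → G) (n : ℕ) :
    ∀ (j : ℕ) (ω : Ω), Gprod j (fun i => N (n + i) ω) = prodN N n j ω := by
  intro j
  induction j with
  | zero => intro ω; rfl
  | succ j ih =>
      intro ω
      show Gprod j (fun i => N (n + i) ω) * N (n + (j + 1)) ω = _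
      rw [ih, TsirelsonAux.prodN_succ]
      rfl

/-- Under (P1') with a.s. limits `Y_k` having cancellative action on `S`,
every extremal solution satisfies `X_l → x` a.s. as `l → -∞` for a deterministic `x ∈ S`
and `X_k = Y_k x` a.s.; moreover, unless `Σ^c S` is a singleton, uniqueness in law fails. -/
theorem tsirelson_P1'_cancellative_limit
    {Ω : Type w} [MeasurableSpace Ω] (P : Measure Ω) [IsProbabilityMeasure P]
    (μ : ℕ → Measure G) (hμ : ∀ k, IsProbabilityMeasure (μ k))
    (X : ℕ → Ω → S) (N : ℕ → Ω → G) (hsol : IsSolution P μ X N)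
    (Y : ℕ → Ω → G)
    (hP1 : ∀ n : ℕ, ∀ᵐ ω ∂P, Tendsto (fun j => prodN N n j ω) atTop (𝓝 (Y n ω)))
    (hYc : ∀ n : ℕ, ∀ᵐ ω ∂P, Y n ω ∈ {σ : G | ∀ x y : S, σ • x = σ • y → x = y})
    (hext : TailTrivial P fun k => past X k ⊔ past N k) :
    (∃ x : S,
      (∀ᵐ ω ∂P, Tendsto (fun l => X l ω) atTop (𝓝 x)) ∧
      ∀ k, X k =ᵐ[P] fun ω => Y k ω • x) ∧
    (¬ Set.Subsingleton
        (Set.image2 (· • ·) {σ : G | ∀ x y : S, σ • x = σ • y → x = y} (Set.univ : Set S)) →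
      ¬ (∀ (Ω₁ : Type (max u v)) (_ : MeasurableSpace Ω₁) (P₁ : Measure Ω₁)
          (X₁ : ℕ → Ω₁ → S) (N₁ : ℕ → Ω₁ → G)
          (Ω₂ : Type (max u v)) (_ : MeasurableSpace Ω₂) (P₂ : Measure Ω₂)
          (X₂ : ℕ → Ω₂ → S) (N₂ : ℕ → Ω₂ → G),
          IsProbabilityMeasure P₁ → IsProbabilityMeasure P₂ →
          IsSolution P₁ μ X₁ N₁ → IsSolution P₂ μ X₂ N₂ →
          jointLaw P₁ X₁ N₁ = jointLaw P₂ X₂ N₂)) := by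
  classical
  letI : MetricSpace S := TopologicalSpace.metrizableSpaceMetric S
  haveI : (ae P).NeBot := ae_neBot.2 (IsProbabilityMeasure.ne_zero P)
  -- a.e., the trajectory converges and the limit represents every `X n`
  have hconv : ∀ᵐ ω ∂P, ∃ z : S, Tendsto (fun l => X l ω) atTop (𝓝 z) ∧
      ∀ n, X n ω = Y n ω • z := by
    have h1 := ae_all_iff.2 hP1
    have h2 := ae_all_iff.2 hYc
    have h3 : ∀ᵐ ω ∂P, ∀ n j, X n ω = prodN N n j ω • X (n + j + 1) ω :=
      ae_all_iff.2 fun n => ae_all_iff.2 fun j => X_eq_prodN_smul hsol n j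
    filter_upwards [h1, h2, h3] with ω hω1 hω2 hω3
    have key : ∀ (n : ℕ) (z' : S) (φ : ℕ → ℕ), Tendsto φ atTop atTop →
        Tendsto (fun i => X (φ i) ω) atTop (𝓝 z') → X n ω = Y n ω • z' := by
      intro n z' φ hφ hz'
      have hj : Tendsto (fun i => φ i - n - 1) atTop atTop := by
        refine tendsto_atTop_atTop.2 fun b => ?_
        obtain ⟨i0, hi0⟩ := tendsto_atTop_atTop.1 hφ (b + n + 1)
        exact ⟨i0, fun a ha => by have := hi0 a ha; omega⟩
      have hev : ∀ᶠ i in atTop, n + (φ i - n - 1) + 1 = φ i := by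
        filter_upwards [hφ.eventually_ge_atTop (n + 1)] with i hi
        omega
      have t1 : Tendsto (fun i => prodN N n (φ i - n - 1) ω) atTop (𝓝 (Y n ω)) :=
        (hω1 n).comp hj
      have t2 : Tendsto (fun i => X (n + (φ i - n - 1) + 1) ω) atTop (𝓝 z') := by
        refine Tendsto.congr' ?_ hz'
        filter_upwards [hev] with i hi
        rw [hi]
      have t3 := t1.smul t2
      have t4 : (fun i => prodN N n (φ i - n - 1) ω • X (n + (φ i - n - 1) + 1) ω)
          = fun _ => X n ω := funext fun i => (hω3 n _).symm
      rw [t4] at t3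
      exact tendsto_nhds_unique tendsto_const_nhds t3
    obtain ⟨z, -, φ, hφmono, hφz⟩ :=
      isCompact_univ.tendsto_subseq (x := fun l => X l ω) (fun l => Set.mem_univ _)
    refine ⟨z, ?_, fun n => key n z φ hφmono.tendsto_atTop hφz⟩
    refine tendsto_of_subseq_tendsto fun ns hns => ?_
    obtain ⟨z', -, ms, hmsmono, hmz⟩ :=
      isCompact_univ.tendsto_subseq (x := fun i => X (ns i) ω) (fun l => Set.mem_univ _)
    refine ⟨ms, ?_⟩
    have hz' : X 0 ω = Y 0 ω • z' :=
      key 0 z' (ns ∘ ms) (hns.comp hmsmono.tendsto_atTop) hmz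
    have hz0 : X 0 ω = Y 0 ω • z := key 0 z φ hφmono.tendsto_atTop hφz
    have hzz : z' = z := hω2 0 z' z (by rw [← hz', ← hz0])
    rw [← hzz]
    exact hmz
  obtain ⟨ωex, zex, -, -⟩ := hconv.exists
  haveI : Nonempty S := ⟨zex⟩
  set u : ℕ → S := TopologicalSpace.denseSeq S with hu_def
  have hu : DenseRange u := TopologicalSpace.denseRange_denseSeq S
  set E : S → ℕ → Set Ω :=
    fun b m => {ω | ∀ᶠ l in atTop, dist (X l ω) b < 1 / (m + 1)} with hE
  have hEtail : ∀ b m, MeasurableSet[⨅ k, past X k ⊔ past N k] (E b m) := by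
    intro b m
    rw [MeasurableSpace.measurableSet_iInf]
    intro k
    have hk : MeasurableSet[past X k] (E b m) := by
      have heq : E b m = ⋃ r, ⋂ i, {ω | dist (X (k + r + i) ω) b < 1 / (m + 1)} := by
        ext ω
        simp only [hE, Set.mem_iUnion, Set.mem_iInter, Set.mem_setOf_eq]
        constructor
        · intro hev
          obtain ⟨r0, hr0⟩ := eventually_atTop.1 hev
          exact ⟨r0, fun i => hr0 _ (by omega)⟩
        · rintro ⟨r, hr⟩
          rw [eventually_atTop]
          refine ⟨k + r, fun l hl => ?_⟩
          have := hr (l - (k + r))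
          rwa [show k + r + (l - (k + r)) = l by omega] at this
      rw [heq]
      refine MeasurableSet.iUnion fun r => MeasurableSet.iInter fun i => ?_
      exact TsirelsonAux.measurable_past_self (by omega) measurableSet_ball
    exact (le_sup_left : past X k ≤ past X k ⊔ past N k) _ hk
  have hEmeas : ∀ b m, MeasurableSet (E b m) := by
    intro b m
    refine le_trans (iInf_le (fun k => past X k ⊔ past N k) 0) ?_ _ (hEtail b m)
    exact sup_le (TsirelsonAux.past_le hsol.measurable_X 0)
      (TsirelsonAux.past_le hsol.measurable_N 0)
  have hE01 : ∀ b m, P (E b m) = 0 ∨ P (E b m) = 1 := fun b m => hext _ (hEtail b m)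
  have hcover : ∀ m : ℕ, ∀ᵐ ω ∂P, ∃ i, ω ∈ E (u i) m := by
    intro m
    filter_upwards [hconv] with ω hω
    obtain ⟨z, hz, -⟩ := hω
    have hpos : (0:ℝ) < 1 / (m + 1) / 2 := by positivity
    obtain ⟨i, hi⟩ := hu.exists_dist_lt z hpos
    refine ⟨i, ?_⟩
    have hev : ∀ᶠ l in atTop, X l ω ∈ Metric.ball z (1 / (m + 1) / 2) :=
      hz.eventually_mem (Metric.ball_mem_nhds z hpos)
    show ∀ᶠ l in atTop, dist (X l ω) (u i) < 1 / (m + 1)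
    filter_upwards [hev] with l hl
    have h1 : dist (X l ω) z < 1 / (m + 1) / 2 := hl
    have h2 : dist (X l ω) (u i) ≤ dist (X l ω) z + dist z (u i) := dist_triangle _ _ _
    linarith
  have hchoice : ∀ m : ℕ, ∃ i, P (E (u i) m) = 1 := by
    intro m
    by_contra hcon
    push_neg at hcon
    have h0 : ∀ i, P (E (u i) m) = 0 := fun i => (hE01 (u i) m).resolve_right (hcon i)
    have hz0 : P (⋃ i, E (u i) m) = 0 := measure_iUnion_null h0
    have hmem : ∀ᵐ ω ∂P, ω ∈ ⋃ i, E (u i) m := by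
      filter_upwards [hcover m] with ω hω
      exact Set.mem_iUnion.2 hω
    have h1 : P (⋃ i, E (u i) m) = 1 := by
      rw [← prob_compl_eq_zero_iff (MeasurableSet.iUnion fun i => hEmeas (u i) m)]
      exact ae_iff.1 hmem
    rw [hz0] at h1
    exact zero_ne_one h1
  choose b hb using hchoice
  have hF : ∀ᵐ ω ∂P, ∀ m, ω ∈ E (u (b m)) m := by
    rw [ae_all_iff]
    intro m
    have := (prob_compl_eq_zero_iff (hEmeas (u (b m)) m)).2 (hb m)
    exact ae_iff.2 this
  obtain ⟨ω₁, hω₁conv, hω₁F⟩ := (hconv.and hF).exists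
  obtain ⟨x, hx, -⟩ := hω₁conv
  have hdistb : ∀ (ω' : Ω) (z : S), Tendsto (fun l => X l ω') atTop (𝓝 z) →
      (∀ m, ω' ∈ E (u (b m)) m) → ∀ m : ℕ, dist z (u (b m)) ≤ 1 / (m + 1) := by
    intro ω' z hz hmem m
    have hev : ∀ᶠ l in atTop, dist (X l ω') (u (b m)) < 1 / (m + 1) := hmem m
    have hten : Tendsto (fun l => dist (X l ω') (u (b m))) atTop
        (𝓝 (dist z (u (b m)))) := hz.dist tendsto_const_nhds
    exact le_of_tendsto hten (hev.mono fun l hl => hl.le)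
  have hlimeq : ∀ᵐ ω ∂P, Tendsto (fun l => X l ω) atTop (𝓝 x) ∧
      ∀ n, X n ω = Y n ω • x := by
    filter_upwards [hconv, hF] with ω hω hmem
    obtain ⟨z, hz, hrep⟩ := hω
    have hzx : z = x := by
      have h1 := hdistb ω z hz hmem
      have h2 := hdistb ω₁ x hx hω₁F
      have hd : ∀ m : ℕ, dist z x ≤ 2 / (m + 1) := by
        intro m
        have ht := dist_triangle_right z x (u (b m))
        have e1 := h1 m
        have e2 := h2 m
        have : (2:ℝ) / (m + 1) = 1 / (m + 1) + 1 / (m + 1) := by ring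
        linarith
      by_contra hne
      have hpos : 0 < dist z x := dist_pos.2 (fun h => hne (by rw [h]))
      obtain ⟨m, hm⟩ := exists_nat_one_div_lt (half_pos hpos)
      have := hd m
      have h2d : (2:ℝ) / (m + 1) = 2 * (1 / (m + 1)) := by ring
      rw [h2d] at this
      linarith
    rw [hzx] at hz hrep
    exact ⟨hz, hrep⟩
  constructor
  · exact ⟨x, hlimeq.mono fun ω h => h.1, fun k => hlimeq.mono fun ω h => h.2 k⟩
  · intro hns huniq
    obtain ⟨s₁, -, s₂, -, hs12⟩ := Set.not_subsingleton_iff.1 hns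
    letI : MetricSpace G := TopologicalSpace.metrizableSpaceMetric G
    haveI : Nonempty G := ⟨N 0 ω₁⟩
    -- measurable limit of coordinate products on path space
    set C : Set (ℕ → G) := {w | ∃ c, Tendsto (fun j => Gprod j w) atTop (𝓝 c)} with hC
    have hCmeas : MeasurableSet C :=
      measurableSet_exists_tendsto fun j => measurable_Gprod j
    obtain ⟨g₀⟩ := ‹Nonempty G›
    set F : ℕ → (ℕ → G) → G := fun j w => if w ∈ C then Gprod j w else g₀ with hFdef
    have hFmeas : ∀ j, Measurable (F j) :=
      fun j => Measurable.ite hCmeas (measurable_Gprod j) measurable_const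
    set g : (ℕ → G) → G := fun w => limUnder atTop (fun j => F j w) with hgdef
    have hgtendsto : ∀ w, Tendsto (fun j => F j w) atTop (𝓝 (g w)) := by
      intro w
      by_cases hw : w ∈ C
      · obtain ⟨cc, hcc⟩ := id hw
        have hFw : (fun j => F j w) = fun j => Gprod j w := by
          funext j; simp only [hFdef, if_pos hw]
        have ht : Tendsto (fun j => F j w) atTop (𝓝 cc) := by rw [hFw]; exact hcc
        rw [show g w = cc from ht.limUnder_eq]
        exact ht
      · have hFw : (fun j => F j w) = fun _ => g₀ := by
          funext j; simp only [hFdef, if_neg hw]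
        have ht : Tendsto (fun j => F j w) atTop (𝓝 g₀) := by
          rw [hFw]; exact tendsto_const_nhds
        rw [show g w = g₀ from ht.limUnder_eq]
        exact ht
    have hgmeas : Measurable g :=
      measurable_of_tendsto_metrizable hFmeas (tendsto_pi_nhds.2 hgtendsto)
    -- measurable versions of the limits Y
    set Yt : ℕ → Ω → G := fun n ω => g (fun i => N (n + i) ω) with hYtdef
    have hYtmeas_past : ∀ n, Measurable[past N n] (Yt n) := by
      intro n
      have h1 : Measurable[past N n] fun ω => (fun i => N (n + i) ω : ℕ → G) :=
        (@measurable_pi_iff Ω ℕ (fun _ => G) (past N n) _ _).2 fun i =>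
          TsirelsonAux.measurable_past_self (by omega)
      exact hgmeas.comp h1
    have hYtmeas : ∀ n, Measurable (Yt n) :=
      fun n => (hYtmeas_past n).mono (TsirelsonAux.past_le hsol.measurable_N n) le_rfl
    have hYteq : ∀ n, Yt n =ᵐ[P] Y n := by
      intro n
      filter_upwards [hP1 n] with ω hω
      have hGp : (fun j => Gprod j (fun i => N (n + i) ω)) = fun j => prodN N n j ω :=
        funext fun j => Gprod_eq_prodN N n j ω
      have hwC : (fun i => N (n + i) ω) ∈ C := ⟨Y n ω, by rw [hGp]; exact hω⟩
      have hFw : (fun j => F j (fun i => N (n + i) ω)) = fun j => prodN N n j ω := by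
        funext j
        simp only [hFdef, if_pos hwC]
        exact Gprod_eq_prodN N n j ω
      show limUnder atTop (fun j => F j (fun i => N (n + i) ω)) = Y n ω
      exact Tendsto.limUnder_eq (by rw [hFw]; exact hω)
    have hYmul : ∀ n, ∀ᵐ ω ∂P, Y n ω = N n ω * Y (n + 1) ω := by
      intro n
      filter_upwards [hP1 n, hP1 (n + 1)] with ω h1 h2
      have hfe : (fun j => prodN N n (j + 1) ω) = fun j => N n ω * prodN N (n + 1) j ω :=
        funext fun j => TsirelsonAux.prodN_succ_left N n j ω
      have t1 : Tendsto (fun j => N n ω * prodN N (n + 1) j ω) atTop (𝓝 (Y n ω)) := by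
        rw [← hfe]
        exact h1.comp (tendsto_add_atTop_nat 1)
      have t2 : Tendsto (fun j => N n ω * prodN N (n + 1) j ω) atTop
          (𝓝 (N n ω * Y (n + 1) ω)) := tendsto_const_nhds.mul h2
      exact tendsto_nhds_unique t1 t2
    -- the two modified solutions
    have hXt : ∀ s : S, IsSolution P μ (fun k ω => Yt k ω • s) N := by
      intro s
      refine ⟨?_, hsol.measurable_N, ?_, ?_, hsol.law_N⟩
      · intro k
        exact (continuous_smul.measurable).comp ((hYtmeas k).prodMk measurable_const)
      · intro k
        filter_upwards [hYteq k, hYteq (k + 1), hYmul k] with ω e1 e2 e3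
        show Yt k ω • s = N k ω • Yt (k + 1) ω • s
        rw [e1, e2, e3, ← smul_eq_mul, smul_assoc]
      · intro k
        rw [Indep_iff]
        intro t1 t2 ht1 ht2
        refine (Indep_iff _ _ _).1 (hsol.indep k) t1 t2 ht1 ?_
        have hle : past (fun k ω => Yt k ω • s) (k + 1) ≤ past N (k + 1) := by
          refine iSup₂_le fun j hj => ?_
          have hm : Measurable[past N (k + 1)] fun ω => Yt j ω • s :=
            (continuous_smul.measurable).comp
              (((hYtmeas_past j).mono (TsirelsonAux.past_mono hj) le_rfl).prodMk
                measurable_const)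
          exact hm.comap_le
        exact (sup_le (hle.trans le_sup_right) le_sup_right) _ ht2
    -- push both to the path space and compare
    have hsol1 := isSolution_jointLaw P μ _ N (hXt s₁)
    have hsol2 := isSolution_jointLaw P μ _ N (hXt s₂)
    set Φ1 : Ω → (ℕ → S) × (ℕ → G) :=
      fun ω => (fun k => Yt k ω • s₁, fun k => N k ω) with hΦ1def
    set Φ2 : Ω → (ℕ → S) × (ℕ → G) :=
      fun ω => (fun k => Yt k ω • s₂, fun k => N k ω) with hΦ2def
    have hΦ1 : Measurable Φ1 :=
      Measurable.prodMk (measurable_pi_lambda _ (hXt s₁).measurable_X)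
        (measurable_pi_lambda _ hsol.measurable_N)
    have hΦ2 : Measurable Φ2 :=
      Measurable.prodMk (measurable_pi_lambda _ (hXt s₂).measurable_X)
        (measurable_pi_lambda _ hsol.measurable_N)
    haveI hprob1 : IsProbabilityMeasure (jointLaw P (fun k ω => Yt k ω • s₁) N) :=
      Measure.isProbabilityMeasure_map hΦ1.aemeasurable
    haveI hprob2 : IsProbabilityMeasure (jointLaw P (fun k ω => Yt k ω • s₂) N) :=
      Measure.isProbabilityMeasure_map hΦ2.aemeasurable
    have heq0 := huniq ((ℕ → S) × (ℕ → G)) inferInstance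
      (jointLaw P (fun k ω => Yt k ω • s₁) N) (fun k p => p.1 k) (fun k p => p.2 k)
      ((ℕ → S) × (ℕ → G)) inferInstance
      (jointLaw P (fun k ω => Yt k ω • s₂) N) (fun k p => p.1 k) (fun k p => p.2 k)
      hprob1 hprob2 hsol1 hsol2
    have hid : ∀ Q : Measure ((ℕ → S) × (ℕ → G)),
        jointLaw Q (fun k (p : (ℕ → S) × (ℕ → G)) => p.1 k) (fun k p => p.2 k) = Q := by
      intro Q
      show Q.map _ = Q
      exact Measure.map_id
    rw [hid, hid] at heq0
    -- the distinguishing event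
    have h1m : Measurable fun p : (ℕ → S) × (ℕ → G) => p.1 0 :=
      (measurable_pi_apply 0).comp measurable_fst
    have h2m : Measurable fun p : (ℕ → S) × (ℕ → G) => g (fun i => p.2 (0 + i)) • s₁ :=
      (continuous_smul.measurable).comp
        ((hgmeas.comp (measurable_pi_lambda _ fun i =>
          (measurable_pi_apply (0 + i)).comp measurable_snd)).prodMk measurable_const)
    have hAmeas : MeasurableSet {p : (ℕ → S) × (ℕ → G) |
        p.1 0 = g (fun i => p.2 (0 + i)) • s₁} :=
      (h1m.prodMk h2m) (isClosed_eq continuous_fst continuous_snd).measurableSet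
    have e1 : jointLaw P (fun k ω => Yt k ω • s₁) N
        {p : (ℕ → S) × (ℕ → G) | p.1 0 = g (fun i => p.2 (0 + i)) • s₁} = 1 := by
      show (P.map Φ1) _ = 1
      rw [Measure.map_apply hΦ1 hAmeas]
      have : Φ1 ⁻¹' {p : (ℕ → S) × (ℕ → G) | p.1 0 = g (fun i => p.2 (0 + i)) • s₁}
          = Set.univ := by
        ext ω
        simp only [Set.mem_preimage, Set.mem_setOf_eq, Set.mem_univ, iff_true, hΦ1def]
        rfl
      rw [this]
      exact measure_univ
    have e2 : jointLaw P (fun k ω => Yt k ω • s₂) N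
        {p : (ℕ → S) × (ℕ → G) | p.1 0 = g (fun i => p.2 (0 + i)) • s₁} = 0 := by
      show (P.map Φ2) _ = 0
      rw [Measure.map_apply hΦ2 hAmeas]
      have hae : ∀ᵐ ω ∂P, ¬ (Yt 0 ω • s₂ = Yt 0 ω • s₁) := by
        filter_upwards [hYteq 0, hYc 0] with ω e hc habs
        rw [e] at habs
        exact hs12 (hc s₂ s₁ habs).symm
      have h0 : P {ω | Yt 0 ω • s₂ = Yt 0 ω • s₁} = 0 := by
        have := ae_iff.1 hae
        simpa only [not_not] using this
      exact h0
    rw [heq0, e2] at e1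
    exact zero_ne_one e1


end Tsirelson
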